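/- Let ρ : ℝ³ → ℂ be integrable and let f : ℝ³ → ℂ be an H¹ function. Then ∫ (∫ |V(x − y)| |ρ(y)| dy)² |f(x)|² dx ≤ C² (∫ |ρ(y)| dy)² (∫ |f(x)|² dx + ∫ ‖∇f(x)‖² dx). (This is the operator bound ‖(V ∗ ρ) M^{−1}‖ ≤ C ‖ρ‖_{L¹} on the multiplication operator by the convolution V ∗ ρ composed with M^{−1} = (1 − Δ)^{−1/2}.) -/

import Mathlib

open MeasureTheory
open scoped ENNReal

/-- A function `f : ℝ³ → ℂ` is an `H¹` function: it is differentiable, square-integrable,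
and its (Fréchet) derivative is square-integrable (in operator norm). -/
def IsH1 (f : EuclideanSpace ℝ (Fin 3) → ℂ) : Prop :=
  Differentiable ℝ f ∧
    (∫⁻ x, (‖f x‖₊ : ℝ≥0∞) ^ 2) < ⊤ ∧
    (∫⁻ x, (‖fderiv ℝ f x‖₊ : ℝ≥0∞) ^ 2) < ⊤

lemma ennreal_sqrt_sq (a : ℝ≥0∞) : (a ^ (1/2 : ℝ)) ^ 2 = a := by
  rw [← ENNReal.rpow_natCast (a ^ (1/2:ℝ)) 2, ← ENNReal.rpow_mul]
  norm_num

/-- Cauchy–Schwarz for lower integrals. -/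
lemma lintegral_cauchy_schwarz {α : Type*} [MeasurableSpace α] (μ : Measure α)
    {g h : α → ℝ≥0∞} (hg : AEMeasurable g μ) (hh : AEMeasurable h μ) :
    (∫⁻ y, g y * h y ∂μ) ^ 2 ≤ (∫⁻ y, g y ^ 2 ∂μ) * (∫⁻ y, h y ^ 2 ∂μ) := by
  have h22 : (2:ℝ).HolderConjugate 2 := Real.HolderConjugate.two_two
  have key := ENNReal.lintegral_mul_le_Lp_mul_Lq μ h22 hg hh
  calc (∫⁻ y, g y * h y ∂μ) ^ 2
      ≤ ((∫⁻ a, g a ^ (2:ℝ) ∂μ) ^ (1/(2:ℝ)) * (∫⁻ a, h a ^ (2:ℝ) ∂μ) ^ (1/(2:ℝ))) ^ 2 :=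
        pow_le_pow_left' key 2
    _ = (∫⁻ y, g y ^ 2 ∂μ) * (∫⁻ y, h y ^ 2 ∂μ) := by
        rw [mul_pow, ennreal_sqrt_sq, ennreal_sqrt_sq]
        congr 1 <;> refine lintegral_congr fun a => ?_ <;>
          rw [← ENNReal.rpow_natCast _ 2] <;> norm_num

/-- Weighted Cauchy–Schwarz. -/
lemma lintegral_cauchy_schwarz_weight {α : Type*} [MeasurableSpace α] (μ : Measure α)
    {g w : α → ℝ≥0∞} (hg : AEMeasurable g μ) (hw : AEMeasurable w μ) :
    (∫⁻ y, g y * w y ∂μ) ^ 2 ≤ (∫⁻ y, g y ^ 2 * w y ∂μ) * (∫⁻ y, w y ∂μ) := by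
  have h1 : AEMeasurable (fun y => g y * (w y) ^ (1/2:ℝ)) μ :=
    hg.mul (hw.pow_const _)
  have h2 : AEMeasurable (fun y => (w y) ^ (1/2:ℝ)) μ := hw.pow_const _
  have key := lintegral_cauchy_schwarz μ h1 h2
  have e1 : ∀ y, (g y * (w y) ^ (1/2:ℝ)) * ((w y) ^ (1/2:ℝ)) = g y * w y := by
    intro y
    rw [mul_assoc, ← sq, ennreal_sqrt_sq]
  have e2 : ∀ y, (g y * (w y) ^ (1/2:ℝ)) ^ 2 = g y ^ 2 * w y := by
    intro y; rw [mul_pow, ennreal_sqrt_sq]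
  have e3 : ∀ y, ((w y) ^ (1/2:ℝ)) ^ 2 = w y := fun y => ennreal_sqrt_sq _
  simp only [e1, e2, e3] at key
  exact key

lemma fderiv_shift (f : EuclideanSpace ℝ (Fin 3) → ℂ) (hf : Differentiable ℝ f)
    (y x : EuclideanSpace ℝ (Fin 3)) :
    fderiv ℝ (fun z => f (z + y)) x = fderiv ℝ f (x + y) := by
  have h1 : HasFDerivAt (fun z : EuclideanSpace ℝ (Fin 3) => z + y)
      (ContinuousLinearMap.id ℝ _) x := (hasFDerivAt_id x).add_const y
  have h2 := ((hf (x + y)).hasFDerivAt.comp x h1)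
  simpa [Function.comp_def] using h2.fderiv

theorem stmt15 (V : EuclideanSpace ℝ (Fin 3) → ℝ) (hV : Measurable V)
    (C : ℝ) (hC : 0 ≤ C)
    (hbound : ∀ f : EuclideanSpace ℝ (Fin 3) → ℂ, IsH1 f →
      (∫⁻ x, (‖V x • f x‖₊ : ℝ≥0∞) ^ 2) ≤
        (ENNReal.ofReal C) ^ 2 *
          ((∫⁻ x, (‖f x‖₊ : ℝ≥0∞) ^ 2) + ∫⁻ x, (‖fderiv ℝ f x‖₊ : ℝ≥0∞) ^ 2))
    (ρ : EuclideanSpace ℝ (Fin 3) → ℂ) (hρ : Integrable ρ)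
    (f : EuclideanSpace ℝ (Fin 3) → ℂ) (hf : IsH1 f) :
    (∫⁻ x, (∫⁻ y, (‖V (x - y)‖₊ : ℝ≥0∞) * (‖ρ y‖₊ : ℝ≥0∞)) ^ 2 * (‖f x‖₊ : ℝ≥0∞) ^ 2) ≤
      (ENNReal.ofReal C) ^ 2 * (∫⁻ y, (‖ρ y‖₊ : ℝ≥0∞)) ^ 2 *
        ((∫⁻ x, (‖f x‖₊ : ℝ≥0∞) ^ 2) + ∫⁻ x, (‖fderiv ℝ f x‖₊ : ℝ≥0∞) ^ 2) := by
  classical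
  obtain ⟨hfd, hfA, hfB⟩ := hf
  set A := (∫⁻ x, (‖f x‖₊ : ℝ≥0∞) ^ 2) with hA
  set B := (∫⁻ x, (‖fderiv ℝ f x‖₊ : ℝ≥0∞) ^ 2) with hB
  set K := (ENNReal.ofReal C) ^ 2 * (A + B) with hK
  have hKne : K ≠ ⊤ := by
    refine ENNReal.mul_ne_top (by simp [ENNReal.pow_ne_top]) ?_
    exact ENNReal.add_ne_top.2 ⟨hfA.ne, hfB.ne⟩
  -- replace ρ by a measurable representative
  obtain ⟨ρ', hρ'm, hρ'ae⟩ := hρ.aemeasurable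
  have hρnorm : ∀ᵐ y, (‖ρ y‖₊ : ℝ≥0∞) = (‖ρ' y‖₊ : ℝ≥0∞) :=
    hρ'ae.mono fun y hy => by rw [hy]
  set N := (∫⁻ y, (‖ρ y‖₊ : ℝ≥0∞)) with hN
  have hNN : N = ∫⁻ y, (‖ρ' y‖₊ : ℝ≥0∞) := lintegral_congr_ae hρnorm
  have hNne : N ≠ ⊤ := hρ.2.ne
  -- the translated function is H¹ with the same norms
  have hshift : ∀ y : EuclideanSpace ℝ (Fin 3),
      (∫⁻ x, (‖V x‖₊ : ℝ≥0∞) ^ 2 * (‖f (x + y)‖₊ : ℝ≥0∞) ^ 2) ≤ K := by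
    intro y
    set fy : EuclideanSpace ℝ (Fin 3) → ℂ := fun z => f (z + y) with hfy
    have hfyd : Differentiable ℝ fy := hfd.comp (differentiable_id.add_const y)
    have hAy : (∫⁻ x, (‖fy x‖₊ : ℝ≥0∞) ^ 2) = A := by
      rw [hA]
      exact lintegral_add_right_eq_self (μ := volume) (fun x => (‖f x‖₊ : ℝ≥0∞) ^ 2) y
    have hBy : (∫⁻ x, (‖fderiv ℝ fy x‖₊ : ℝ≥0∞) ^ 2) = B := by
      have : ∀ x, fderiv ℝ fy x = fderiv ℝ f (x + y) := fderiv_shift f hfd y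
      simp only [this]
      exact lintegral_add_right_eq_self (μ := volume) (fun x => (‖fderiv ℝ f x‖₊ : ℝ≥0∞) ^ 2) y
    have hH1 : IsH1 fy := ⟨hfyd, by rw [hAy]; exact hfA, by rw [hBy]; exact hfB⟩
    have := hbound fy hH1
    rw [hAy, hBy] at this
    refine le_trans (le_of_eq ?_) this
    refine lintegral_congr fun x => ?_
    rw [nnnorm_smul, ENNReal.coe_mul, mul_pow]
  -- main chain
  have step1 : ∀ x, (∫⁻ y, (‖V (x - y)‖₊ : ℝ≥0∞) * (‖ρ y‖₊ : ℝ≥0∞)) ^ 2 ≤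
      (∫⁻ y, (‖V (x - y)‖₊ : ℝ≥0∞) ^ 2 * (‖ρ' y‖₊ : ℝ≥0∞)) * N := by
    intro x
    have e : (∫⁻ y, (‖V (x - y)‖₊ : ℝ≥0∞) * (‖ρ y‖₊ : ℝ≥0∞)) =
        ∫⁻ y, (‖V (x - y)‖₊ : ℝ≥0∞) * (‖ρ' y‖₊ : ℝ≥0∞) :=
      lintegral_congr_ae (hρnorm.mono fun y hy => by simp only [hy])
    rw [e, hNN]
    exact lintegral_cauchy_schwarz_weight volume
      ((hV.comp (measurable_const.sub measurable_id)).nnnorm.coe_nnreal_ennreal.aemeasurable)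
      hρ'm.nnnorm.coe_nnreal_ennreal.aemeasurable
  set G : EuclideanSpace ℝ (Fin 3) → EuclideanSpace ℝ (Fin 3) → ℝ≥0∞ :=
    fun x y => (‖ρ' y‖₊ : ℝ≥0∞) * ((‖V (x - y)‖₊ : ℝ≥0∞) ^ 2 * (‖f x‖₊ : ℝ≥0∞) ^ 2) with hG
  have hGmeas : Measurable (Function.uncurry G) := by
    have h1 : Measurable fun p : EuclideanSpace ℝ (Fin 3) × EuclideanSpace ℝ (Fin 3) =>
        (‖ρ' p.2‖₊ : ℝ≥0∞) := hρ'm.nnnorm.coe_nnreal_ennreal.comp measurable_snd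
    have h2 : Measurable fun p : EuclideanSpace ℝ (Fin 3) × EuclideanSpace ℝ (Fin 3) =>
        (‖V (p.1 - p.2)‖₊ : ℝ≥0∞) :=
      (hV.comp (measurable_fst.sub measurable_snd)).nnnorm.coe_nnreal_ennreal
    have h3 : Measurable fun p : EuclideanSpace ℝ (Fin 3) × EuclideanSpace ℝ (Fin 3) =>
        (‖f p.1‖₊ : ℝ≥0∞) :=
      (hfd.continuous.measurable.nnnorm.coe_nnreal_ennreal).comp measurable_fst
    exact h1.mul ((h2.pow_const 2).mul (h3.pow_const 2))
  have step2 : ∀ x, ((∫⁻ y, (‖V (x - y)‖₊ : ℝ≥0∞) ^ 2 * (‖ρ' y‖₊ : ℝ≥0∞)) * N) *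
      (‖f x‖₊ : ℝ≥0∞) ^ 2 = N * ∫⁻ y, G x y := by
    intro x
    rw [mul_comm _ N, mul_assoc]
    congr 1
    rw [← lintegral_mul_const' ((‖f x‖₊ : ℝ≥0∞) ^ 2) _
      (ENNReal.pow_ne_top ENNReal.coe_ne_top)]
    exact lintegral_congr fun y => by simp only [hG]; ring
  have step3 : ∀ y, (∫⁻ x, G x y) ≤ (‖ρ' y‖₊ : ℝ≥0∞) * K := by
    intro y
    have e : (∫⁻ x, G x y) = (‖ρ' y‖₊ : ℝ≥0∞) *
        ∫⁻ x, (‖V (x - y)‖₊ : ℝ≥0∞) ^ 2 * (‖f x‖₊ : ℝ≥0∞) ^ 2 :=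
      lintegral_const_mul' _ _ ENNReal.coe_ne_top
    rw [e]
    refine mul_le_mul_right ?_ _
    have etr := lintegral_add_right_eq_self (μ := volume)
      (fun x => (‖V (x - y)‖₊ : ℝ≥0∞) ^ 2 * (‖f x‖₊ : ℝ≥0∞) ^ 2) y
    simp only [add_sub_cancel_right] at etr
    rw [← etr]
    exact hshift y
  calc (∫⁻ x, (∫⁻ y, (‖V (x - y)‖₊ : ℝ≥0∞) * (‖ρ y‖₊ : ℝ≥0∞)) ^ 2 * (‖f x‖₊ : ℝ≥0∞) ^ 2)
      ≤ ∫⁻ x, ((∫⁻ y, (‖V (x - y)‖₊ : ℝ≥0∞) ^ 2 * (‖ρ' y‖₊ : ℝ≥0∞)) * N) *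
          (‖f x‖₊ : ℝ≥0∞) ^ 2 :=
        lintegral_mono fun x => mul_le_mul_left (step1 x) _
    _ = ∫⁻ x, N * ∫⁻ y, G x y := lintegral_congr fun x => step2 x
    _ = N * ∫⁻ x, ∫⁻ y, G x y := lintegral_const_mul' N _ hNne
    _ = N * ∫⁻ y, ∫⁻ x, G x y := by rw [lintegral_lintegral_swap hGmeas.aemeasurable]
    _ ≤ N * ∫⁻ y, (‖ρ' y‖₊ : ℝ≥0∞) * K := mul_le_mul_right (lintegral_mono step3) _
    _ = N * (N * K) := by rw [lintegral_mul_const' K _ hKne, ← hNN]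
    _ = (ENNReal.ofReal C) ^ 2 * N ^ 2 * (A + B) := by rw [hK]; ring
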